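/- Suppose V ∈ L^∞_loc(ℝ²) is nonnegative with liminf_{|x|→∞} V(x)/|x|² > 0, let Ω* be defined as the supremum of Ω > 0 such that V(x) - (Ω²/4)|x|² → ∞ as |x| → ∞, and fix 0 < Ω < Ω*. Then there exist constants c, C > 0 such that for every u ∈ H¹(ℝ², ℂ) with ∫(V+1)|u|² < ∞: c‖u‖²_H ≤ ∫_{ℝ²} |(∇ - i(Ω/2)x^⊥)u|² dx + ∫_{ℝ²} (|V_Ω(x)| + 1)|u|² dx ≤ C‖u‖²_H, where ‖u‖²_H = ∫ |∇u|² + (V+1)|u|² dx and V_Ω(x) = V(x) - (Ω²/4)|x|². -/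

import Mathlib

open MeasureTheory Filter

noncomputable def pd1C (f : ℝ × ℝ → ℂ) (x : ℝ × ℝ) : ℂ := fderiv ℝ f x (1, 0)
noncomputable def pd2C (f : ℝ × ℝ → ℂ) (x : ℝ × ℝ) : ℂ := fderiv ℝ f x (0, 1)

/-- Squared Euclidean norm of the gradient of a complex-valued function. -/
noncomputable def gradsqC (f : ℝ × ℝ → ℂ) (x : ℝ × ℝ) : ℝ :=
  ‖pd1C f x‖ ^ 2 + ‖pd2C f x‖ ^ 2

/-- Squared norm of the magnetic gradient `(∇ - i(Ω/2)x^⊥)u`, where `x^⊥ = (-x₂, x₁)`. -/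
noncomputable def maggradsq (Ω : ℝ) (u : ℝ × ℝ → ℂ) (x : ℝ × ℝ) : ℝ :=
  ‖pd1C u x - Complex.I * Complex.ofReal (Ω / 2 * (-x.2)) * u x‖ ^ 2 +
    ‖pd2C u x - Complex.I * Complex.ofReal (Ω / 2 * x.1) * u x‖ ^ 2

lemma sq_norm_sub_le_aux (a b : ℂ) : ‖a - b‖ ^ 2 ≤ 2 * ‖a‖ ^ 2 + 2 * ‖b‖ ^ 2 := by
  nlinarith [norm_sub_le a b, norm_nonneg a, norm_nonneg b, norm_nonneg (a - b),
    sq_nonneg (‖a‖ - ‖b‖)]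

lemma sq_norm_le_aux (a b : ℂ) : ‖a‖ ^ 2 ≤ 2 * ‖a - b‖ ^ 2 + 2 * ‖b‖ ^ 2 := by
  have h := sq_norm_sub_le_aux (a - b) (-b)
  simpa using h

lemma coef_sq_norm (r : ℝ) (z : ℂ) :
    ‖Complex.I * Complex.ofReal r * z‖ ^ 2 = r ^ 2 * ‖z‖ ^ 2 := by
  rw [norm_mul, norm_mul, Complex.norm_I, one_mul, Complex.norm_real, Real.norm_eq_abs,
    mul_pow, sq_abs]

/-- Pointwise: magnetic gradient squared is controlled by gradient squared plus weight. -/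
lemma mag_le_grad (Ω : ℝ) (u : ℝ × ℝ → ℂ) (x : ℝ × ℝ) :
    maggradsq Ω u x ≤ 2 * gradsqC u x + Ω ^ 2 / 2 * ((x.1 ^ 2 + x.2 ^ 2) * ‖u x‖ ^ 2) := by
  have h1 := sq_norm_sub_le_aux (pd1C u x) (Complex.I * Complex.ofReal (Ω / 2 * (-x.2)) * u x)
  have h2 := sq_norm_sub_le_aux (pd2C u x) (Complex.I * Complex.ofReal (Ω / 2 * x.1) * u x)
  have e1 := coef_sq_norm (Ω / 2 * (-x.2)) (u x)
  have e2 := coef_sq_norm (Ω / 2 * x.1) (u x)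
  simp only [maggradsq, gradsqC]
  rw [e1] at h1; rw [e2] at h2
  nlinarith [sq_nonneg (‖u x‖)]

/-- Pointwise: gradient squared is controlled by magnetic gradient squared plus weight. -/
lemma grad_le_mag (Ω : ℝ) (u : ℝ × ℝ → ℂ) (x : ℝ × ℝ) :
    gradsqC u x ≤ 2 * maggradsq Ω u x + Ω ^ 2 / 2 * ((x.1 ^ 2 + x.2 ^ 2) * ‖u x‖ ^ 2) := by
  have h1 := sq_norm_le_aux (pd1C u x) (Complex.I * Complex.ofReal (Ω / 2 * (-x.2)) * u x)
  have h2 := sq_norm_le_aux (pd2C u x) (Complex.I * Complex.ofReal (Ω / 2 * x.1) * u x)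
  have e1 := coef_sq_norm (Ω / 2 * (-x.2)) (u x)
  have e2 := coef_sq_norm (Ω / 2 * x.1) (u x)
  simp only [maggradsq, gradsqC]
  rw [e1] at h1; rw [e2] at h2
  nlinarith [sq_nonneg (‖u x‖)]

/-- From an eventual (cocompact) quadratic lower bound we get a global pointwise bound. -/
lemma cocompact_sq_bound (f : ℝ × ℝ → ℝ) (d : ℝ) (hd : 0 < d)
    (h : ∀ᶠ x : ℝ × ℝ in cocompact (ℝ × ℝ), d * (x.1 ^ 2 + x.2 ^ 2) ≤ f x) :
    ∃ A > 0, ∀ x : ℝ × ℝ, x.1 ^ 2 + x.2 ^ 2 ≤ A * (|f x| + 1) := by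
  obtain ⟨K, hK, hKs⟩ := mem_cocompact.mp h
  obtain ⟨R, hR⟩ := hK.isBounded.subset_closedBall 0
  refine ⟨max d⁻¹ (2 * R ^ 2 + 1),
    lt_of_lt_of_le (inv_pos.2 hd) (le_max_left _ _), fun x => ?_⟩
  have habs : (0:ℝ) ≤ |f x| := abs_nonneg _
  by_cases hx : x ∈ K
  · have hxR : ‖x‖ ≤ R := by simpa using hR hx
    have h1 : ‖x.1‖ ≤ ‖x‖ := norm_fst_le x
    have h2 : ‖x.2‖ ≤ ‖x‖ := norm_snd_le x
    have hb : x.1 ^ 2 + x.2 ^ 2 ≤ 2 * R ^ 2 + 1 := by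
      rw [Real.norm_eq_abs] at h1 h2
      nlinarith [abs_nonneg x.1, abs_nonneg x.2, sq_abs x.1, sq_abs x.2, norm_nonneg x]
    have hmax : 2 * R ^ 2 + 1 ≤ max d⁻¹ (2 * R ^ 2 + 1) := le_max_right _ _
    nlinarith [sq_nonneg R]
  · have hfx : d * (x.1 ^ 2 + x.2 ^ 2) ≤ f x := hKs hx
    have hdi : (0:ℝ) < d⁻¹ := inv_pos.2 hd
    have h1 : x.1 ^ 2 + x.2 ^ 2 ≤ d⁻¹ * f x := by
      have := mul_le_mul_of_nonneg_left hfx hdi.le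
      rwa [← mul_assoc, inv_mul_cancel₀ hd.ne', one_mul] at this
    have h2 : d⁻¹ * f x ≤ d⁻¹ * |f x| :=
      mul_le_mul_of_nonneg_left (le_abs_self _) hdi.le
    have h3 : d⁻¹ * |f x| ≤ max d⁻¹ (2 * R ^ 2 + 1) * |f x| :=
      mul_le_mul_of_nonneg_right (le_max_left _ _) habs
    have h4 : (0:ℝ) < max d⁻¹ (2 * R ^ 2 + 1) := lt_of_lt_of_le hdi (le_max_left _ _)
    nlinarith

set_option maxHeartbeats 2000000 in
/-- equivalence of the magnetic weighted norm and the ordinary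
weighted Sobolev norm, for `0 < Ω < Ω*`. -/
theorem magnetic_norm_equivalence (V : ℝ × ℝ → ℝ) (Ω : ℝ)
    (hV0 : ∀ x, 0 ≤ V x)
    (hVloc : ∀ R : ℝ, ∃ M : ℝ, ∀ x : ℝ × ℝ, ‖x‖ ≤ R → V x ≤ M)
    (hVinf : ∃ c : ℝ, 0 < c ∧
      ∀ᶠ x : ℝ × ℝ in cocompact (ℝ × ℝ), c * (x.1 ^ 2 + x.2 ^ 2) ≤ V x)
    (hΩpos : 0 < Ω)
    (hΩlt : Ω < sSup {ω : ℝ | 0 < ω ∧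
        Tendsto (fun x : ℝ × ℝ => V x - ω ^ 2 / 4 * (x.1 ^ 2 + x.2 ^ 2))
          (cocompact (ℝ × ℝ)) atTop}) :
    ∃ c > 0, ∃ C > 0, ∀ u : ℝ × ℝ → ℂ, ContDiff ℝ 1 u →
      Integrable (fun x => (V x + 1) * ‖u x‖ ^ 2) →
      Integrable (fun x => gradsqC u x) →
      c * ((∫ x, gradsqC u x) + ∫ x, (V x + 1) * ‖u x‖ ^ 2) ≤
          (∫ x, maggradsq Ω u x) +
            (∫ x, (|V x - Ω ^ 2 / 4 * (x.1 ^ 2 + x.2 ^ 2)| + 1) * ‖u x‖ ^ 2) ∧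
        (∫ x, maggradsq Ω u x) +
            (∫ x, (|V x - Ω ^ 2 / 4 * (x.1 ^ 2 + x.2 ^ 2)| + 1) * ‖u x‖ ^ 2) ≤
          C * ((∫ x, gradsqC u x) + ∫ x, (V x + 1) * ‖u x‖ ^ 2) := by
  -- pick ω ∈ S with Ω < ω
  obtain ⟨ω, ⟨hωpos, hωtend⟩, hΩω⟩ : ∃ ω ∈ {ω : ℝ | 0 < ω ∧
      Tendsto (fun x : ℝ × ℝ => V x - ω ^ 2 / 4 * (x.1 ^ 2 + x.2 ^ 2))
        (cocompact (ℝ × ℝ)) atTop}, Ω < ω := by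
    by_contra h
    push_neg at h
    exact absurd hΩlt (not_lt.2 (Real.sSup_le (fun ω hω => h ω hω) hΩpos.le))
  -- constant A : |x|² ≤ A (V + 1)
  obtain ⟨cV, hcV, hVev⟩ := hVinf
  obtain ⟨A, hApos, hA'⟩ := cocompact_sq_bound V cV hcV hVev
  have hA : ∀ x : ℝ × ℝ, x.1 ^ 2 + x.2 ^ 2 ≤ A * (V x + 1) := fun x => by
    have := hA' x; rwa [abs_of_nonneg (hV0 x)] at this
  -- constant B : |x|² ≤ B (|V_Ω| + 1)
  have hδ : (0:ℝ) < (ω ^ 2 - Ω ^ 2) / 4 := by nlinarith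
  have hev2 : ∀ᶠ x : ℝ × ℝ in cocompact (ℝ × ℝ),
      (ω ^ 2 - Ω ^ 2) / 4 * (x.1 ^ 2 + x.2 ^ 2) ≤
        V x - Ω ^ 2 / 4 * (x.1 ^ 2 + x.2 ^ 2) := by
    filter_upwards [hωtend.eventually_ge_atTop 0] with x hx
    nlinarith [sq_nonneg x.1, sq_nonneg x.2]
  obtain ⟨B, hBpos, hB⟩ := cocompact_sq_bound
    (fun x => V x - Ω ^ 2 / 4 * (x.1 ^ 2 + x.2 ^ 2)) _ hδ hev2
  have htB0 : (0:ℝ) ≤ Ω ^ 2 * B := mul_nonneg (sq_nonneg Ω) hBpos.le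
  have htA0 : (0:ℝ) ≤ Ω ^ 2 * A := mul_nonneg (sq_nonneg Ω) hApos.le
  have hpos3B : (0:ℝ) < 3 + Ω ^ 2 * B := by linarith
  have hpos3A : (0:ℝ) < 3 + Ω ^ 2 * A := by linarith
  refine ⟨(3 + Ω ^ 2 * B)⁻¹, inv_pos.2 hpos3B, 3 + Ω ^ 2 * A, hpos3A,
    fun u hu hW hG => ?_⟩
  have hcu : Continuous u := hu.continuous
  have hcu2 : Continuous fun x : ℝ × ℝ => ‖u x‖ ^ 2 := (hcu.norm.pow 2)
  have hfd : Continuous (fderiv ℝ u) := hu.continuous_fderiv one_ne_zero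
  have hc1 : Continuous (pd1C u) := hfd.clm_apply continuous_const
  have hc2 : Continuous (pd2C u) := hfd.clm_apply continuous_const
  have hcmag : Continuous (maggradsq Ω u) := by
    unfold maggradsq
    apply Continuous.add
    · exact ((hc1.sub ((continuous_const.mul
        (Complex.continuous_ofReal.comp (by fun_prop))).mul hcu)).norm.pow 2)
    · exact ((hc2.sub ((continuous_const.mul
        (Complex.continuous_ofReal.comp (by fun_prop))).mul hcu)).norm.pow 2)
  -- integrability of |x|² |u|²
  have hXsq : Integrable (fun x : ℝ × ℝ => (x.1 ^ 2 + x.2 ^ 2) * ‖u x‖ ^ 2) := by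
    refine (hW.const_mul A).mono' ?_ (ae_of_all _ fun x => ?_)
    · exact ((continuous_fst.pow 2).add (continuous_snd.pow 2)).mul hcu2
        |>.aestronglyMeasurable
    · rw [Real.norm_eq_abs, abs_of_nonneg (by positivity)]
      calc (x.1 ^ 2 + x.2 ^ 2) * ‖u x‖ ^ 2 ≤ A * (V x + 1) * ‖u x‖ ^ 2 :=
            mul_le_mul_of_nonneg_right (hA x) (by positivity)
        _ = A * ((V x + 1) * ‖u x‖ ^ 2) := by ring
  -- pointwise bounds on the weight functions
  have hp3 : ∀ x : ℝ × ℝ, (|V x - Ω ^ 2 / 4 * (x.1 ^ 2 + x.2 ^ 2)| + 1) * ‖u x‖ ^ 2 ≤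
      (1 + Ω ^ 2 * A / 4) * ((V x + 1) * ‖u x‖ ^ 2) := by
    intro x
    have habs : |V x - Ω ^ 2 / 4 * (x.1 ^ 2 + x.2 ^ 2)| ≤
        V x + Ω ^ 2 / 4 * (x.1 ^ 2 + x.2 ^ 2) := by
      rw [abs_le]
      constructor <;> nlinarith [hV0 x, sq_nonneg x.1, sq_nonneg x.2, sq_nonneg Ω]
    have h2 : Ω ^ 2 / 4 * (x.1 ^ 2 + x.2 ^ 2) ≤ Ω ^ 2 / 4 * (A * (V x + 1)) :=
      mul_le_mul_of_nonneg_left (hA x) (by positivity)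
    have h3 : (|V x - Ω ^ 2 / 4 * (x.1 ^ 2 + x.2 ^ 2)| + 1) ≤
        (1 + Ω ^ 2 * A / 4) * (V x + 1) := by nlinarith [hV0 x]
    calc (|V x - Ω ^ 2 / 4 * (x.1 ^ 2 + x.2 ^ 2)| + 1) * ‖u x‖ ^ 2 ≤
        ((1 + Ω ^ 2 * A / 4) * (V x + 1)) * ‖u x‖ ^ 2 :=
          mul_le_mul_of_nonneg_right h3 (by positivity)
      _ = (1 + Ω ^ 2 * A / 4) * ((V x + 1) * ‖u x‖ ^ 2) := by ring
  have hp4 : ∀ x : ℝ × ℝ, (V x + 1) * ‖u x‖ ^ 2 ≤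
      (1 + Ω ^ 2 * B / 4) * ((|V x - Ω ^ 2 / 4 * (x.1 ^ 2 + x.2 ^ 2)| + 1) * ‖u x‖ ^ 2) := by
    intro x
    have h1 : V x - Ω ^ 2 / 4 * (x.1 ^ 2 + x.2 ^ 2) ≤
        |V x - Ω ^ 2 / 4 * (x.1 ^ 2 + x.2 ^ 2)| := le_abs_self _
    have h2 : Ω ^ 2 / 4 * (x.1 ^ 2 + x.2 ^ 2) ≤
        Ω ^ 2 / 4 * (B * (|V x - Ω ^ 2 / 4 * (x.1 ^ 2 + x.2 ^ 2)| + 1)) :=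
      mul_le_mul_of_nonneg_left (hB x) (by positivity)
    have h3 : (V x + 1) ≤ (1 + Ω ^ 2 * B / 4) *
        (|V x - Ω ^ 2 / 4 * (x.1 ^ 2 + x.2 ^ 2)| + 1) := by
      nlinarith [abs_nonneg (V x - Ω ^ 2 / 4 * (x.1 ^ 2 + x.2 ^ 2))]
    calc (V x + 1) * ‖u x‖ ^ 2 ≤
        ((1 + Ω ^ 2 * B / 4) * (|V x - Ω ^ 2 / 4 * (x.1 ^ 2 + x.2 ^ 2)| + 1)) * ‖u x‖ ^ 2 :=
          mul_le_mul_of_nonneg_right h3 (by positivity)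
      _ = _ := by ring
  -- measurability and integrability of the |V_Ω| weight integral
  have hW' : Integrable (fun x : ℝ × ℝ =>
      (|V x - Ω ^ 2 / 4 * (x.1 ^ 2 + x.2 ^ 2)| + 1) * ‖u x‖ ^ 2) := by
    have hVmeas : AEStronglyMeasurable (fun x : ℝ × ℝ => (V x + 1) * ‖u x‖ ^ 2) volume :=
      hW.aestronglyMeasurable
    have hcsub : Continuous fun x : ℝ × ℝ =>
        (1 + Ω ^ 2 / 4 * (x.1 ^ 2 + x.2 ^ 2)) * ‖u x‖ ^ 2 := by fun_prop
    have h2 : AEStronglyMeasurable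
        (fun x : ℝ × ℝ => (V x - Ω ^ 2 / 4 * (x.1 ^ 2 + x.2 ^ 2)) * ‖u x‖ ^ 2) volume := by
      have heq : (fun x : ℝ × ℝ => (V x - Ω ^ 2 / 4 * (x.1 ^ 2 + x.2 ^ 2)) * ‖u x‖ ^ 2) =
          fun x => (V x + 1) * ‖u x‖ ^ 2 -
            (1 + Ω ^ 2 / 4 * (x.1 ^ 2 + x.2 ^ 2)) * ‖u x‖ ^ 2 := by
        funext x; ring
      rw [heq]
      exact hVmeas.sub hcsub.aestronglyMeasurable
    have h3 : AEStronglyMeasurable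
        (fun x : ℝ × ℝ => (|V x - Ω ^ 2 / 4 * (x.1 ^ 2 + x.2 ^ 2)| + 1) * ‖u x‖ ^ 2) volume := by
      have heq : (fun x : ℝ × ℝ => (|V x - Ω ^ 2 / 4 * (x.1 ^ 2 + x.2 ^ 2)| + 1) * ‖u x‖ ^ 2) =
          fun x => ‖(V x - Ω ^ 2 / 4 * (x.1 ^ 2 + x.2 ^ 2)) * ‖u x‖ ^ 2‖ + ‖u x‖ ^ 2 := by
        funext x
        rw [Real.norm_eq_abs, abs_mul, abs_of_nonneg (by positivity : (0:ℝ) ≤ ‖u x‖ ^ 2)]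
        ring
      rw [heq]
      exact h2.norm.add hcu2.aestronglyMeasurable
    refine (hW.const_mul (1 + Ω ^ 2 * A / 4)).mono' h3 (ae_of_all _ fun x => ?_)
    rw [Real.norm_eq_abs, abs_of_nonneg (by positivity)]
    exact hp3 x
  -- integrability of maggradsq
  have hM : Integrable (fun x => maggradsq Ω u x) := by
    refine ((hG.const_mul 2).add (hXsq.const_mul (Ω ^ 2 / 2))).mono'
      hcmag.aestronglyMeasurable (ae_of_all _ fun x => ?_)
    rw [Real.norm_eq_abs, abs_of_nonneg (by unfold maggradsq; positivity)]
    exact mag_le_grad Ω u x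
  -- nonnegativity of integrals
  have hGnn : 0 ≤ ∫ x, gradsqC u x :=
    integral_nonneg fun x => by unfold gradsqC; positivity
  have hMnn : 0 ≤ ∫ x, maggradsq Ω u x :=
    integral_nonneg fun x => by unfold maggradsq; positivity
  have hWnn : 0 ≤ ∫ x, (V x + 1) * ‖u x‖ ^ 2 :=
    integral_nonneg fun x => mul_nonneg (by linarith [hV0 x]) (by positivity)
  have hW'nn : 0 ≤ ∫ x, (|V x - Ω ^ 2 / 4 * (x.1 ^ 2 + x.2 ^ 2)| + 1) * ‖u x‖ ^ 2 :=
    integral_nonneg fun x => by positivity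
  -- integral inequalities
  have hXle : ∫ x, (x.1 ^ 2 + x.2 ^ 2) * ‖u x‖ ^ 2 ≤ A * ∫ x, (V x + 1) * ‖u x‖ ^ 2 := by
    rw [← integral_const_mul]
    refine integral_mono hXsq (hW.const_mul A) fun x => ?_
    calc (x.1 ^ 2 + x.2 ^ 2) * ‖u x‖ ^ 2 ≤ A * (V x + 1) * ‖u x‖ ^ 2 :=
          mul_le_mul_of_nonneg_right (hA x) (by positivity)
      _ = A * ((V x + 1) * ‖u x‖ ^ 2) := by ring
  have hXle' : ∫ x, (x.1 ^ 2 + x.2 ^ 2) * ‖u x‖ ^ 2 ≤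
      B * ∫ x, (|V x - Ω ^ 2 / 4 * (x.1 ^ 2 + x.2 ^ 2)| + 1) * ‖u x‖ ^ 2 := by
    rw [← integral_const_mul]
    refine integral_mono hXsq (hW'.const_mul B) fun x => ?_
    calc (x.1 ^ 2 + x.2 ^ 2) * ‖u x‖ ^ 2 ≤
        B * (|V x - Ω ^ 2 / 4 * (x.1 ^ 2 + x.2 ^ 2)| + 1) * ‖u x‖ ^ 2 :=
          mul_le_mul_of_nonneg_right (hB x) (by positivity)
      _ = B * ((|V x - Ω ^ 2 / 4 * (x.1 ^ 2 + x.2 ^ 2)| + 1) * ‖u x‖ ^ 2) := by ring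
  have hXnn : 0 ≤ ∫ x, (x.1 ^ 2 + x.2 ^ 2) * ‖u x‖ ^ 2 :=
    integral_nonneg fun x => by positivity
  have hI1 : ∫ x, maggradsq Ω u x ≤ 2 * (∫ x, gradsqC u x) +
      Ω ^ 2 / 2 * ∫ x, (x.1 ^ 2 + x.2 ^ 2) * ‖u x‖ ^ 2 := by
    rw [← integral_const_mul, ← integral_const_mul,
      ← integral_add (hG.const_mul 2) (hXsq.const_mul (Ω ^ 2 / 2))]
    exact integral_mono hM ((hG.const_mul 2).add (hXsq.const_mul (Ω ^ 2 / 2)))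
      fun x => mag_le_grad Ω u x
  have hI2 : ∫ x, gradsqC u x ≤ 2 * (∫ x, maggradsq Ω u x) +
      Ω ^ 2 / 2 * ∫ x, (x.1 ^ 2 + x.2 ^ 2) * ‖u x‖ ^ 2 := by
    rw [← integral_const_mul, ← integral_const_mul,
      ← integral_add (hM.const_mul 2) (hXsq.const_mul (Ω ^ 2 / 2))]
    exact integral_mono hG ((hM.const_mul 2).add (hXsq.const_mul (Ω ^ 2 / 2)))
      fun x => grad_le_mag Ω u x
  have hI3 : ∫ x, (|V x - Ω ^ 2 / 4 * (x.1 ^ 2 + x.2 ^ 2)| + 1) * ‖u x‖ ^ 2 ≤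
      (1 + Ω ^ 2 * A / 4) * ∫ x, (V x + 1) * ‖u x‖ ^ 2 := by
    rw [← integral_const_mul]
    exact integral_mono hW' (hW.const_mul _) fun x => hp3 x
  have hI4 : ∫ x, (V x + 1) * ‖u x‖ ^ 2 ≤
      (1 + Ω ^ 2 * B / 4) *
        ∫ x, (|V x - Ω ^ 2 / 4 * (x.1 ^ 2 + x.2 ^ 2)| + 1) * ‖u x‖ ^ 2 := by
    rw [← integral_const_mul]
    exact integral_mono hW (hW'.const_mul _) fun x => hp4 x
  set G := ∫ x, gradsqC u x with hGdef
  set M := ∫ x, maggradsq Ω u x with hMdef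
  set W := ∫ x, (V x + 1) * ‖u x‖ ^ 2 with hWdef
  set W' := ∫ x, (|V x - Ω ^ 2 / 4 * (x.1 ^ 2 + x.2 ^ 2)| + 1) * ‖u x‖ ^ 2 with hW'def
  set X := ∫ x, (x.1 ^ 2 + x.2 ^ 2) * ‖u x‖ ^ 2 with hXdef
  clear_value G M W W' X
  clear hGdef hMdef hWdef hW'def hXdef hW hG hW' hM hXsq hp3 hp4 hA hA' hB hcmag hcu hcu2 hfd hc1 hc2 hVev hev2 hωtend hΩlt hVloc hV0
  have htB : (0:ℝ) ≤ Ω ^ 2 * B := htB0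
  have htA : (0:ℝ) ≤ Ω ^ 2 * A := htA0
  constructor
  · -- lower bound
    have hscaled : Ω ^ 2 / 2 * X ≤ Ω ^ 2 / 2 * (B * W') :=
      mul_le_mul_of_nonneg_left hXle' (by positivity)
    have key : G + W ≤ (3 + Ω ^ 2 * B) * (M + W') := by
      nlinarith [hI2, hI4, hscaled, hMnn, hW'nn, htB,
        mul_nonneg htB hMnn, mul_nonneg htB hW'nn]
    have hpos : (0:ℝ) < 3 + Ω ^ 2 * B := hpos3B
    calc (3 + Ω ^ 2 * B)⁻¹ * (G + W) ≤ (3 + Ω ^ 2 * B)⁻¹ * ((3 + Ω ^ 2 * B) * (M + W')) :=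
          mul_le_mul_of_nonneg_left key (inv_pos.2 hpos).le
      _ = M + W' := by rw [← mul_assoc, inv_mul_cancel₀ hpos.ne', one_mul]
  · -- upper bound
    have hscaled : Ω ^ 2 / 2 * X ≤ Ω ^ 2 / 2 * (A * W) :=
      mul_le_mul_of_nonneg_left hXle (by positivity)
    nlinarith [hI1, hI3, hscaled, hGnn, hWnn, htA,
      mul_nonneg htA hGnn, mul_nonneg htA hWnn]
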